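/- For any two projection operators f and g on a complex Hilbert space, ‖f∘g − g∘f‖ = ‖f∘g − f∘g∘f‖. -/

import Mathlib

open ContinuousLinearMap

theorem commutator_norm_eq
    {H : Type*} [NormedAddCommGroup H] [InnerProductSpace ℂ H] [CompleteSpace H]
    (f g : H →L[ℂ] H)
    (hf : f ∘L f = f) (hf' : adjoint f = f)
    (hg : g ∘L g = g) (hg' : adjoint g = g) :
    ‖f ∘L g - g ∘L f‖ = ‖f ∘L g - f ∘L g ∘L f‖ := by
  have hsf : star f = f := by rw [star_eq_adjoint, hf']
  have hsg : star g = g := by rw [star_eq_adjoint, hg']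
  have hff : f * f = f := hf
  set x : H →L[ℂ] H := f * g - f * g * f with hx
  have hxs : star x = g * f - f * (g * f) := by
    simp [hx, star_sub, star_mul, hsf, hsg, mul_assoc]
  -- algebraic identities
  have h1 : x * f = 0 := by
    simp only [hx, sub_mul, mul_assoc, hff, sub_self]
  have h2 : f * x = x := by
    simp only [hx, mul_sub, ← mul_assoc, hff]
  have h3 : f * star x = 0 := by
    simp only [hxs, mul_sub, ← mul_assoc, hff, sub_self]
  have h4 : star x * f = star x := by
    simp only [hxs, sub_mul, mul_assoc, hff]
  have h5 : f * g - g * f = x - star x := by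
    rw [hx, hxs, mul_assoc]; abel
  -- Pythagoras
  have pyth : ∀ w : H, ‖w‖^2 = ‖f w‖^2 + ‖w - f w‖^2 := by
    intro w
    have horth : (inner ℂ (f w) (w - f w) : ℂ) = 0 := by
      have := ContinuousLinearMap.adjoint_inner_left f (w - f w) w
      rw [hf'] at this
      rw [this, map_sub]
      have : f (f w) = f w := by rw [← ContinuousLinearMap.comp_apply, hf]
      rw [this, sub_self, inner_zero_right]
    have hsum : f w + (w - f w) = w := by abel
    calc ‖w‖^2 = ‖f w + (w - f w)‖^2 := by rw [hsum]
      _ = ‖f w‖^2 + 2 * (RCLike.re (inner ℂ (f w) (w - f w) : ℂ)) + ‖w - f w‖^2 := by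
          rw [@norm_add_sq ℂ]
      _ = ‖f w‖^2 + ‖w - f w‖^2 := by rw [horth]; simp
  have key : ∀ v : H, ‖(x - star x) v‖^2 = ‖x v‖^2 + ‖star x v‖^2 := by
    intro v
    have hfx : f * (x - star x) = x := by rw [mul_sub, h2, h3, sub_zero]
    have hfv : f ((x - star x) v) = x v := by
      rw [← ContinuousLinearMap.comp_apply]
      show (f * (x - star x)) v = x v
      rw [hfx]
    have hrem : (x - star x) v - x v = -(star x v) := by
      rw [ContinuousLinearMap.sub_apply]; abel
    rw [pyth ((x - star x) v), hfv, hrem, norm_neg]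
  have hub : ‖x - star x‖ ≤ ‖x‖ := by
    refine opNorm_le_bound _ (norm_nonneg x) fun v => ?_
    have hxv : ‖x v‖ ≤ ‖x‖ * ‖v - f v‖ := by
      have hh : x v = x (v - f v) := by
        rw [map_sub, ← ContinuousLinearMap.comp_apply x f]
        show x v = x v - (x * f) v
        rw [h1]; simp
      rw [hh]; exact le_opNorm _ _
    have hsv : ‖star x v‖ ≤ ‖x‖ * ‖f v‖ := by
      have hh : star x v = star x (f v) := by
        rw [← ContinuousLinearMap.comp_apply (star x) f]
        show star x v = (star x * f) v
        rw [h4]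
      rw [hh]
      calc ‖star x (f v)‖ ≤ ‖star x‖ * ‖f v‖ := le_opNorm _ _
        _ = ‖x‖ * ‖f v‖ := by rw [norm_star]
    have hsq : ‖(x - star x) v‖^2 ≤ (‖x‖ * ‖v‖)^2 := by
      rw [key v]
      have h6 := pyth v
      have a1 : ‖x v‖^2 ≤ (‖x‖ * ‖v - f v‖)^2 := pow_le_pow_left₀ (norm_nonneg _) hxv 2
      have a2 : ‖star x v‖^2 ≤ (‖x‖ * ‖f v‖)^2 := pow_le_pow_left₀ (norm_nonneg _) hsv 2
      nlinarith [a1, a2, h6, sq_nonneg ‖x‖]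
    calc ‖(x - star x) v‖ = Real.sqrt (‖(x - star x) v‖^2) :=
          (Real.sqrt_sq (norm_nonneg _)).symm
      _ ≤ Real.sqrt ((‖x‖ * ‖v‖)^2) := Real.sqrt_le_sqrt hsq
      _ = ‖x‖ * ‖v‖ := Real.sqrt_sq (by positivity)
  have hfle : ‖f‖ ≤ 1 := by
    have h7 : ‖star f * f‖ = ‖f‖ * ‖f‖ := CStarRing.norm_star_mul_self
    rw [hsf, hff] at h7
    nlinarith [norm_nonneg f]
  have hlb : ‖x‖ ≤ ‖x - star x‖ := by
    have hfx : f * (x - star x) = x := by rw [mul_sub, h2, h3, sub_zero]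
    calc ‖x‖ = ‖f * (x - star x)‖ := by rw [hfx]
      _ ≤ ‖f‖ * ‖x - star x‖ := norm_mul_le _ _
      _ ≤ 1 * ‖x - star x‖ := mul_le_mul_of_nonneg_right hfle (norm_nonneg _)
      _ = ‖x - star x‖ := one_mul _
  have hmain : ‖x - star x‖ = ‖x‖ := le_antisymm hub hlb
  calc ‖f ∘L g - g ∘L f‖ = ‖x - star x‖ := by rw [← h5]; rfl
    _ = ‖x‖ := hmain
    _ = ‖f ∘L g - f ∘L g ∘L f‖ := by rw [hx, mul_assoc]; rfl
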